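/- Let (M, d) be a metric space, let μ, ν ∈ M, and suppose there are sequences (p_n) and (q_n) in M with p_n → μ and q_n → ν, a continuous path in M from p_1 to q_1, and for every n ≥ 1 continuous paths in M from p_n to p_{n+1} and from q_n to q_{n+1} whose images have diameter at most ε_n, where ε_n → 0. Then there is a continuous path in M from μ to ν; in particular μ and ν lie in the same path component of M. -/

import Mathlib

open Set Filter Metric

private noncomputable def chainT (n : ℕ) : ℝ := 1 - (2⁻¹ : ℝ) ^ n

private lemma chainT_lt_succ (n : ℕ) : chainT n < chainT (n + 1) := by
  have h : (2⁻¹ : ℝ) ^ (n + 1) < (2⁻¹ : ℝ) ^ n := by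
    rw [pow_succ]
    nlinarith [pow_pos (by norm_num : (0:ℝ) < 2⁻¹) n]
  simp only [chainT]; linarith

private lemma chainT_mono : StrictMono chainT := strictMono_nat_of_lt_succ chainT_lt_succ

private lemma chainT_zero : chainT 0 = 0 := by simp [chainT]

private lemma chainT_lt_one (n : ℕ) : chainT n < 1 := by
  have := pow_pos (by norm_num : (0:ℝ) < 2⁻¹) n
  simp only [chainT]; linarith

private lemma chainT_tendsto : Tendsto chainT atTop (nhds 1) := by
  have h := tendsto_pow_atTop_nhds_zero_of_lt_one (by norm_num : (0:ℝ) ≤ 2⁻¹)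
    (by norm_num : (2⁻¹ : ℝ) < 1)
  have h2 : Tendsto (fun n : ℕ => 1 - (2⁻¹ : ℝ) ^ n) atTop (nhds (1 - 0)) :=
    tendsto_const_nhds.sub h
  rw [show chainT = fun n : ℕ => 1 - (2⁻¹ : ℝ) ^ n from rfl]
  simpa using h2

private lemma chainT_exists {t : ℝ} (ht : t < 1) : ∃ n, t < chainT (n + 1) := by
  obtain ⟨n, hn⟩ := (chainT_tendsto.eventually (eventually_gt_nhds ht)).exists
  exact ⟨n, hn.trans_le (chainT_mono.monotone (Nat.le_succ n))⟩

section chain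

variable {M : Type*} [MetricSpace M] (μ : M) {p : ℕ → M} (γ : ∀ n, Path (p n) (p (n + 1)))

/-- The infinite concatenation of the paths `γ n`, parametrized so that `γ n` occupies
`[chainT n, chainT (n+1)]`, with value `μ` for `t ≥ 1`. -/
private noncomputable def chainG (t : ℝ) : M :=
  if ht : t < 1 then
    (γ (Nat.find (chainT_exists ht))).extend
      ((t - chainT (Nat.find (chainT_exists ht))) /
        (chainT (Nat.find (chainT_exists ht) + 1) - chainT (Nat.find (chainT_exists ht))))
  else μ

private lemma chainN_eq {t : ℝ} (ht : t < 1) {n : ℕ} (h1 : chainT n ≤ t)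
    (h2 : t < chainT (n + 1)) : Nat.find (chainT_exists ht) = n := by
  rw [Nat.find_eq_iff]
  exact ⟨h2, fun m hm hmt =>
    absurd (hmt.trans_le ((chainT_mono.monotone hm).trans h1)) (lt_irrefl t)⟩

private lemma chainG_piece {t : ℝ} {n : ℕ} (h1 : chainT n ≤ t) (h2 : t ≤ chainT (n + 1)) :
    chainG μ γ t = (γ n).extend ((t - chainT n) / (chainT (n + 1) - chainT n)) := by
  have hd : (0:ℝ) < chainT (n + 1) - chainT n := sub_pos.2 (chainT_lt_succ n)
  rcases lt_or_eq_of_le h2 with h2 | h2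
  · have ht : t < 1 := h2.trans (chainT_lt_one _)
    rw [chainG, dif_pos ht, chainN_eq ht h1 h2]
  · subst h2
    have ht : chainT (n + 1) < 1 := chainT_lt_one _
    rw [chainG, dif_pos ht, chainN_eq ht le_rfl (chainT_lt_succ (n + 1))]
    rw [sub_self, zero_div, Path.extend_zero, div_self hd.ne', Path.extend_one]

private lemma chainG_T (n : ℕ) : chainG μ γ (chainT n) = p n := by
  rw [chainG_piece μ γ le_rfl (chainT_lt_succ n).le, sub_self, zero_div, Path.extend_zero]

private lemma chainG_of_one_le {t : ℝ} (ht : 1 ≤ t) : chainG μ γ t = μ := by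
  rw [chainG, dif_neg (not_lt.2 ht)]

private lemma chainG_mem_range {t : ℝ} {n : ℕ} (h1 : chainT n ≤ t) (h2 : t ≤ chainT (n + 1)) :
    chainG μ γ t ∈ range (γ n) := by
  rw [chainG_piece μ γ h1 h2, ← Path.extend_range]
  exact mem_range_self _

private lemma continuousOn_union_closed {X Y : Type*} [TopologicalSpace X] [TopologicalSpace Y]
    {f : X → Y} {s t : Set X} (hs : IsClosed s) (ht : IsClosed t)
    (Hs : ContinuousOn f s) (Ht : ContinuousOn f t) : ContinuousOn f (s ∪ t) := by
  intro x _
  have hws : ContinuousWithinAt f s x := by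
    by_cases h : x ∈ s
    · exact Hs x h
    · exact continuousWithinAt_of_notMem_closure (by rwa [hs.closure_eq])
  have hwt : ContinuousWithinAt f t x := by
    by_cases h : x ∈ t
    · exact Ht x h
    · exact continuousWithinAt_of_notMem_closure (by rwa [ht.closure_eq])
  exact hws.union hwt

private lemma chainG_continuousOn (n : ℕ) : ContinuousOn (chainG μ γ) (Iic (chainT n)) := by
  induction n with
  | zero =>
    refine (continuousOn_const (c := p 0)).congr fun t ht => ?_
    simp only [mem_Iic, chainT_zero] at ht
    have ht1 : t < 1 := lt_of_le_of_lt ht one_pos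
    have hN : Nat.find (chainT_exists ht1) = 0 := by
      rw [Nat.find_eq_iff]
      exact ⟨lt_of_le_of_lt (by simpa [chainT_zero] using ht) (chainT_lt_succ 0),
        fun m hm => absurd hm (Nat.not_lt_zero m)⟩
    rw [chainG, dif_pos ht1, hN, Path.extend_of_le_zero]
    exact div_nonpos_of_nonpos_of_nonneg (by rw [chainT_zero]; linarith)
      (sub_pos.2 (chainT_lt_succ 0)).le
  | succ n ih =>
    rw [← Iic_union_Icc_eq_Iic (chainT_lt_succ n).le]
    refine continuousOn_union_closed isClosed_Iic isClosed_Icc ih ?_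
    have hc : Continuous fun t : ℝ =>
        (γ n).extend ((t - chainT n) / (chainT (n + 1) - chainT n)) :=
      (γ n).continuous_extend.comp (by fun_prop)
    exact hc.continuousOn.congr fun t ht => chainG_piece μ γ ht.1 ht.2

private lemma chainG_continuous (hp : Tendsto p atTop (nhds μ)) {ε : ℕ → ℝ}
    (hε : Tendsto ε atTop (nhds 0)) (hγ : ∀ n, diam (range (γ n)) ≤ ε n) :
    Continuous (chainG μ γ) := by
  have hcont : ∀ n : ℕ, Continuous fun t => chainG μ γ (min t (chainT n)) := fun n =>
    (chainG_continuousOn μ γ n).comp_continuous (continuous_id.min continuous_const)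
      fun x => mem_Iic.2 (min_le_right _ _)
  refine TendstoUniformly.continuous (F := fun n t => chainG μ γ (min t (chainT n))) (p := atTop)
    ?_ (Eventually.of_forall hcont).frequently
  rw [Metric.tendstoUniformly_iff]
  intro e he
  have h3 : (0:ℝ) < e / 3 := by linarith
  have hev : ∀ᶠ m in atTop, ε m < e / 3 ∧ dist (p m) μ < e / 3 := by
    have h1 : ∀ᶠ m in atTop, ε m < e / 3 := hε.eventually (eventually_lt_nhds h3)
    have h2 : ∀ᶠ m in atTop, dist (p m) μ < e / 3 := Metric.tendsto_nhds.mp hp _ h3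
    exact h1.and h2
  obtain ⟨n₀, hn₀⟩ := eventually_atTop.mp hev
  filter_upwards [eventually_ge_atTop n₀] with n hn t
  rcases le_or_gt t (chainT n) with htn | htn
  · rw [min_eq_left htn, dist_self]; exact he
  rw [min_eq_right htn.le, chainG_T]
  rcases lt_or_ge t 1 with ht1 | ht1
  swap
  · rw [chainG_of_one_le μ γ ht1, dist_comm]
    exact lt_of_lt_of_le (hn₀ n hn).2 (by linarith)
  set m := Nat.find (chainT_exists ht1) with hm
  have hmub : t < chainT (m + 1) := Nat.find_spec (chainT_exists ht1)
  have hmlb : chainT m ≤ t := by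
    rcases Nat.eq_zero_or_pos m with h | h
    · rw [h, chainT_zero]
      have h0n : (0:ℝ) ≤ chainT n := by
        rw [← chainT_zero]; exact chainT_mono.monotone (Nat.zero_le n)
      linarith
    · have hmin := Nat.find_min (chainT_exists ht1) (m := m - 1) (by omega)
      rw [show m - 1 + 1 = m by omega] at hmin
      exact not_lt.1 hmin
  have hnm : n ≤ m := by
    by_contra hcon
    push_neg at hcon
    have : chainT (m + 1) ≤ chainT n := chainT_mono.monotone (by omega)
    linarith
  have hb : Bornology.IsBounded (range (γ m)) :=
    (isCompact_range (γ m).continuous).isBounded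
  have hmem : chainG μ γ t ∈ range (γ m) := chainG_mem_range μ γ hmlb hmub.le
  have hpm : p m ∈ range (γ m) := ⟨0, (γ m).source⟩
  have hd1 : dist (chainG μ γ t) (p m) ≤ ε m :=
    (Metric.dist_le_diam_of_mem hb hmem hpm).trans (hγ m)
  have hd4 : dist (chainG μ γ t) (p n) ≤
      dist (chainG μ γ t) (p m) + dist (p m) μ + dist μ (p n) := dist_triangle4 _ _ _ _
  have hεm : ε m < e / 3 := (hn₀ m (le_trans hn hnm)).1
  have hpmμ : dist (p m) μ < e / 3 := (hn₀ m (le_trans hn hnm)).2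
  have hpnμ : dist μ (p n) < e / 3 := by rw [dist_comm]; exact (hn₀ n hn).2
  linarith

private lemma joined_chain {M : Type*} [MetricSpace M] {μ : M} {p : ℕ → M} {ε : ℕ → ℝ}
    (hp : Tendsto p atTop (nhds μ)) (hε : Tendsto ε atTop (nhds 0))
    (γ : ∀ n, Path (p n) (p (n + 1))) (hγ : ∀ n, diam (range (γ n)) ≤ ε n) :
    Joined (p 0) μ := by
  refine ⟨⟨⟨fun s : unitInterval => chainG μ γ (s : ℝ),
    (chainG_continuous μ γ hp hε hγ).comp continuous_subtype_val⟩, ?_, ?_⟩⟩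
  · have := chainG_T μ γ 0
    rw [chainT_zero] at this
    simpa using this
  · simpa using chainG_of_one_le μ γ (le_refl 1)

end chain

/-- Concatenating chains of paths with shrinking diameters: if `p n → μ`,
`q n → ν`, `p 0` and `q 0` are joined by a path, and consecutive terms of the
chains are joined by paths whose images have diameter at most `ε n → 0`, then
`μ` and `ν` are joined by a path. -/
theorem joined_of_path_chains
    {M : Type*} [MetricSpace M] (μ ν : M) (p q : ℕ → M) (ε : ℕ → ℝ)
    (hp : Tendsto p atTop (nhds μ)) (hq : Tendsto q atTop (nhds ν))
    (hε : Tendsto ε atTop (nhds 0))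
    (h0 : Joined (p 0) (q 0))
    (hpchain : ∀ n : ℕ, ∃ γ : Path (p n) (p (n + 1)),
      Metric.diam (Set.range γ) ≤ ε n)
    (hqchain : ∀ n : ℕ, ∃ γ : Path (q n) (q (n + 1)),
      Metric.diam (Set.range γ) ≤ ε n) :
    Joined μ ν := by
  choose γp hγp using hpchain
  choose γq hγq using hqchain
  exact (joined_chain hp hε γp hγp).symm.trans
    (h0.trans (joined_chain hq hε γq hγq))
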